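/- For every integer k ≥ 1, ∑_{n=1}^{F_{2k} − 1} ⌊φ n⌋³ = (1/4)(F_{2k−1} − 1)(F_{2k+1} − 1)²(F_{2k+2} − 1). -/

import Mathlib

open Nat Finset

noncomputable def gphi : ℝ := (1 + Real.sqrt 5) / 2
noncomputable def gpsi : ℝ := gphi - 1

lemma s5sq : Real.sqrt 5 ^ 2 = 5 := Real.sq_sqrt (by norm_num)
lemma s5gt : 2 < Real.sqrt 5 := by nlinarith [s5sq, Real.sqrt_nonneg 5]
lemma s5lt : Real.sqrt 5 < 3 := by nlinarith [s5sq, Real.sqrt_nonneg 5]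

lemma gphi_sq : gphi ^ 2 = gphi + 1 := by
  unfold gphi; nlinarith [s5sq]

lemma gpsi_pos : 0 < gpsi := by unfold gpsi gphi; nlinarith [s5gt]
lemma gpsi_lt_one : gpsi < 1 := by unfold gpsi gphi; nlinarith [s5lt]
lemma gpsi_sq_le : gpsi ^ 2 ≤ 1/2 := by unfold gpsi gphi; nlinarith [s5gt, s5sq]
lemma one_minus_gphi : 1 - gphi = -gpsi := by unfold gpsi; ring
lemma abs_one_minus_gphi_pow (n : ℕ) : |(1 - gphi) ^ n| = gpsi ^ n := by
  rw [abs_pow, one_minus_gphi, abs_neg, abs_of_pos gpsi_pos]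

lemma gpsi_pow_pos (n : ℕ) : 0 < gpsi ^ n := pow_pos gpsi_pos n
lemma gpsi_pow_lt_one (n : ℕ) (hn : 1 ≤ n) : gpsi ^ n < 1 :=
  pow_lt_one₀ (le_of_lt gpsi_pos) gpsi_lt_one (by omega)
lemma gpsi_pow_le (m n : ℕ) (h : m ≤ n) : gpsi ^ n ≤ gpsi ^ m :=
  pow_le_pow_of_le_one (le_of_lt gpsi_pos) (le_of_lt gpsi_lt_one) h

lemma fib_phi : ∀ m : ℕ, (Nat.fib m : ℝ) * gphi + (1 - gphi) ^ m = Nat.fib (m + 1) := by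
  have h2 : (1 - gphi) ^ 2 = (1 - gphi) + 1 := by nlinarith [gphi_sq]
  intro m
  induction m using Nat.strong_induction_on with
  | _ m IH =>
    match m with
    | 0 => simp
    | 1 => norm_num [Nat.fib]
    | (n+2) =>
      have i0 := IH n (by omega)
      have i1 := IH (n+1) (by omega)
      have hf : (Nat.fib (n+2) : ℝ) = Nat.fib n + Nat.fib (n+1) := by
        rw [Nat.fib_add_two]; push_cast; ring
      have hf3 : (Nat.fib (n+3) : ℝ) = Nat.fib (n+1) + Nat.fib (n+2) := by
        rw [show n+3 = (n+1)+2 from rfl, Nat.fib_add_two]; push_cast; ring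
      have hp : (1 - gphi) ^ (n+2) = (1-gphi)^(n+1) + (1-gphi)^n := by
        have : (1 - gphi) ^ (n+2) = (1-gphi)^n * (1-gphi)^2 := by ring
        rw [this, h2]; ring
      rw [show n+1+1 = n+2 from rfl] at i1
      rw [show n+2+1 = n+3 from rfl, hf3, hf, hp]
      linear_combination i0 + i1 + hf

lemma fract_bounds : ∀ j : ℕ, ∀ m : ℕ, 1 ≤ m → m < Nat.fib (j + 1) →
    gpsi ^ j ≤ Int.fract (gphi * m) ∧ Int.fract (gphi * m) ≤ 1 - gpsi ^ j := by
  intro j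
  induction j using Nat.strong_induction_on with
  | _ j IH =>
    match j with
    | 0 => intro m hm1 hm2; simp [Nat.fib] at hm2; omega
    | 1 => intro m hm1 hm2; simp [Nat.fib] at hm2; omega
    | (jj+2) =>
      intro m hm1 hm2
      rw [show jj+2+1 = jj+3 from rfl] at hm2
      have hfib3 : Nat.fib (jj+3) = Nat.fib (jj+1) + Nat.fib (jj+2) := by
        rw [show jj+3 = (jj+1)+2 from rfl, Nat.fib_add_two]
      by_cases hcase : m < Nat.fib (jj + 2)
      · have h := IH (jj+1) (by omega) m hm1 hcase
        have hw : gpsi ^ (jj+2) ≤ gpsi ^ (jj+1) := gpsi_pow_le _ _ (by omega)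
        constructor <;> nlinarith [h.1, h.2]
      · push_neg at hcase
        obtain ⟨m', rfl⟩ : ∃ m', m = Nat.fib (jj+2) + m' := ⟨m - Nat.fib (jj+2), by omega⟩
        have hm'lt : m' < Nat.fib (jj+1) := by omega
        have hkey : gphi * ((Nat.fib (jj+2) + m' : ℕ) : ℝ)
            = (gphi * m' - (1-gphi)^(jj+2)) + (Nat.fib (jj+3) : ℝ) := by
          have h := fib_phi (jj+2)
          rw [show jj+2+1 = jj+3 from rfl] at h
          push_cast
          linear_combination h
        have hfr : Int.fract (gphi * ((Nat.fib (jj+2) + m' : ℕ) : ℝ))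
            = Int.fract (gphi * m' - (1-gphi)^(jj+2)) := by
          rw [hkey, Int.fract_add_natCast]
        have habs : |(1-gphi)^(jj+2)| = gpsi ^ (jj+2) := abs_one_minus_gphi_pow _
        have hpsmall : gpsi ^ (jj+2) ≤ 1/2 := by
          have := gpsi_pow_le 2 (jj+2) (by omega); linarith [gpsi_sq_le]
        have hplt : gpsi ^ (jj+2) < 1 := gpsi_pow_lt_one _ (by omega)
        rcases Nat.eq_zero_or_pos m' with h0 | hpos
        · subst h0
          have hx : Int.fract (gphi * ((Nat.fib (jj+2) + 0 : ℕ) : ℝ))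
              = Int.fract (-(1-gphi)^(jj+2)) := by
            rw [hfr]; norm_num
          have hself : Int.fract (gpsi^(jj+2)) = gpsi^(jj+2) :=
            Int.fract_eq_self.mpr ⟨(gpsi_pow_pos _).le, hplt⟩
          rcases (abs_eq (gpsi_pow_pos (jj+2)).le).mp habs with he | he
          · rw [hx, he, Int.fract_neg (by rw [hself]; exact (gpsi_pow_pos _).ne'), hself]
            constructor
            · nlinarith [gpsi_pow_pos (jj+2)]
            · nlinarith [gpsi_pow_pos (jj+2)]
          · rw [hx, he, neg_neg, hself]
            exact ⟨le_refl _, by nlinarith [gpsi_pow_pos (jj+2)]⟩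
        · have h := IH jj (by omega) m' hpos hm'lt
          set t := Int.fract (gphi * m') with ht
          have htfl : gphi * (m' : ℝ) = (⌊gphi * (m':ℝ)⌋ : ℝ) + t := by
            rw [ht]; exact (Int.floor_add_fract _).symm
          have hq : gpsi^jj * gpsi^2 = gpsi^(jj+2) := by ring
          have h1 : (1-gphi)^(jj+2) ≤ gpsi^(jj+2) := le_of_abs_le (le_of_eq habs)
          have h1' : -(gpsi^(jj+2)) ≤ (1-gphi)^(jj+2) := by rw [← habs]; exact neg_abs_le _
          have hb1 : gpsi^(jj+2) ≤ t - (1-gphi)^(jj+2) := by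
            nlinarith [h.1, gpsi_pow_pos jj, gpsi_sq_le]
          have hb2 : t - (1-gphi)^(jj+2) ≤ 1 - gpsi^(jj+2) := by
            nlinarith [h.2, gpsi_pow_pos jj, gpsi_sq_le]
          have hval : Int.fract (gphi * ((Nat.fib (jj+2) + m' : ℕ) : ℝ))
              = t - (1-gphi)^(jj+2) := by
            rw [hfr, show gphi * (m':ℝ) - (1-gphi)^(jj+2)
                = ((⌊gphi * (m':ℝ)⌋ : ℤ) : ℝ) + (t - (1-gphi)^(jj+2)) by
                  push_cast; linarith [htfl]]
            rw [Int.fract_intCast_add]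
            apply Int.fract_eq_self.mpr
            exact ⟨by nlinarith [gpsi_pow_pos (jj+2)], by nlinarith [gpsi_pow_pos (jj+2)]⟩
          rw [hval]; exact ⟨hb1, hb2⟩

noncomputable def aE (n : ℕ) : ℝ := ((⌊gphi * (n : ℝ)⌋ : ℤ) : ℝ)

lemma aE_zero : aE 0 = 0 := by simp [aE]

lemma fib_cast_succ (m : ℕ) : (Nat.fib (m+2) : ℝ) = Nat.fib m + Nat.fib (m+1) := by
  rw [Nat.fib_add_two]; push_cast; ring

lemma gpsi_pow_lt (m n : ℕ) (h : m < n) : gpsi ^ n < gpsi ^ m :=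
  pow_lt_pow_right_of_lt_one₀ gpsi_pos gpsi_lt_one h

lemma one_minus_gphi_pow_even (n : ℕ) : (1-gphi)^(2*n) = gpsi^(2*n) := by
  rw [one_minus_gphi]; exact Even.neg_pow ⟨n, by ring⟩ _

lemma one_minus_gphi_pow_odd (n : ℕ) : (1-gphi)^(2*n+1) = -gpsi^(2*n+1) := by
  rw [one_minus_gphi]; exact Odd.neg_pow ⟨n, by ring⟩ _

lemma aE_fib_even (j : ℕ) : aE (Nat.fib (2*j+2)) = (Nat.fib (2*j+3) : ℝ) - 1 := by
  have h := fib_phi (2*j+2)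
  rw [show 2*j+2+1 = 2*j+3 from rfl] at h
  have he : (1-gphi)^(2*j+2) = gpsi^(2*j+2) := by
    rw [show 2*j+2 = 2*(j+1) from by ring]; exact one_minus_gphi_pow_even (j+1)
  have h0 : 0 < gpsi^(2*j+2) := gpsi_pow_pos _
  have h1 : gpsi^(2*j+2) < 1 := gpsi_pow_lt_one _ (by omega)
  unfold aE
  have hfl : (⌊gphi * ((Nat.fib (2*j+2) : ℕ) : ℝ)⌋ : ℤ) = (Nat.fib (2*j+3) : ℤ) - 1 := by
    apply Int.floor_eq_iff.mpr
    constructor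
    · push_cast; nlinarith [h, he]
    · push_cast; nlinarith [h, he]
  rw [hfl]; push_cast; ring

lemma aE_shift_A (j m : ℕ) (hm1 : 1 ≤ m) (hm2 : m < Nat.fib (2*j+1)) :
    aE (Nat.fib (2*j+2) + m) = aE m + (Nat.fib (2*j+3) : ℝ) := by
  have h := fib_phi (2*j+2)
  rw [show 2*j+2+1 = 2*j+3 from rfl] at h
  have he : (1-gphi)^(2*j+2) = gpsi^(2*j+2) := by
    rw [show 2*j+2 = 2*(j+1) from by ring]; exact one_minus_gphi_pow_even (j+1)
  have hfr := fract_bounds (2*j) m hm1 hm2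
  have hlt : gpsi^(2*j+2) < gpsi^(2*j) := gpsi_pow_lt _ _ (by omega)
  have hfl : gphi * (m:ℝ) = (⌊gphi * (m:ℝ)⌋ : ℝ) + Int.fract (gphi * (m:ℝ)) :=
    (Int.floor_add_fract _).symm
  have hkey : gphi * ((Nat.fib (2*j+2) + m : ℕ) : ℝ)
      = (Int.fract (gphi * (m:ℝ)) - gpsi^(2*j+2))
        + ((⌊gphi * (m:ℝ)⌋ + (Nat.fib (2*j+3) : ℤ) : ℤ) : ℝ) := by
    push_cast
    rw [← he]
    linear_combination h + hfl
  have hfloor : ⌊gphi * ((Nat.fib (2*j+2) + m : ℕ) : ℝ)⌋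
      = ⌊gphi * (m:ℝ)⌋ + (Nat.fib (2*j+3) : ℤ) := by
    rw [hkey, Int.floor_add_intCast,
      Int.floor_eq_zero_iff.mpr ⟨by linarith [hfr.1], by
        linarith [Int.fract_lt_one (gphi * (m:ℝ)), gpsi_pow_pos (2*j+2)]⟩, zero_add]
  unfold aE
  rw [hfloor]; push_cast; ring

lemma aE_shift_B (j m : ℕ) (hm2 : m < Nat.fib (2*j+2)) :
    aE (Nat.fib (2*j+3) + m) = aE m + (Nat.fib (2*j+4) : ℝ) := by
  have h := fib_phi (2*j+3)
  rw [show 2*j+3+1 = 2*j+4 from rfl] at h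
  have he : (1-gphi)^(2*j+3) = -gpsi^(2*j+3) := by
    rw [show 2*j+3 = 2*(j+1)+1 from by ring]; exact one_minus_gphi_pow_odd (j+1)
  have hub : Int.fract (gphi * (m:ℝ)) + gpsi^(2*j+3) < 1 := by
    rcases Nat.eq_zero_or_pos m with h0 | hm1
    · subst h0
      have : Int.fract (gphi * ((0:ℕ):ℝ)) = 0 := by norm_num
      rw [this]; linarith [gpsi_pow_lt_one (2*j+3) (by omega)]
    · have hfr := fract_bounds (2*j+1) m hm1 hm2
      have hlt : gpsi^(2*j+3) < gpsi^(2*j+1) := gpsi_pow_lt _ _ (by omega)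
      linarith [hfr.2]
  have hfl : gphi * (m:ℝ) = (⌊gphi * (m:ℝ)⌋ : ℝ) + Int.fract (gphi * (m:ℝ)) :=
    (Int.floor_add_fract _).symm
  have hkey : gphi * ((Nat.fib (2*j+3) + m : ℕ) : ℝ)
      = (Int.fract (gphi * (m:ℝ)) + gpsi^(2*j+3))
        + ((⌊gphi * (m:ℝ)⌋ + (Nat.fib (2*j+4) : ℤ) : ℤ) : ℝ) := by
    rw [he] at h
    push_cast
    linear_combination h + hfl
  have hfloor : ⌊gphi * ((Nat.fib (2*j+3) + m : ℕ) : ℝ)⌋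
      = ⌊gphi * (m:ℝ)⌋ + (Nat.fib (2*j+4) : ℤ) := by
    rw [hkey, Int.floor_add_intCast,
      Int.floor_eq_zero_iff.mpr ⟨by linarith [Int.fract_nonneg (gphi * (m:ℝ)), gpsi_pow_pos (2*j+3)], hub⟩, zero_add]
  unfold aE
  rw [hfloor]; push_cast; ring

noncomputable def SS (p N : ℕ) : ℝ := ∑ n ∈ Finset.Icc 1 N, (aE n) ^ p

lemma Icc1_eq_Ioc (X : ℕ) : Finset.Icc 1 X = Finset.Ioc 0 X := by
  ext n; simp [Finset.mem_Icc, Finset.mem_Ioc]; omega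

lemma Ioc_eq_Icc (A B : ℕ) : Finset.Ioc A B = Finset.Icc (A+1) B := by
  ext n; simp [Finset.mem_Icc, Finset.mem_Ioc]

lemma sum_split (f : ℕ → ℝ) (A B : ℕ) :
    ∑ n ∈ Finset.Icc 1 (A+B), f n
      = ∑ n ∈ Finset.Icc 1 A, f n + ∑ n ∈ Finset.Icc (A+1) (A+B), f n := by
  rw [Icc1_eq_Ioc, Icc1_eq_Ioc, ← Ioc_eq_Icc,
    Finset.sum_Ioc_consecutive f (Nat.zero_le A) (Nat.le_add_right A B)]

lemma sum_shift (f : ℕ → ℝ) (F T : ℕ) :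
    ∑ n ∈ Finset.Icc F (F+T), f n = ∑ m ∈ Finset.Icc 0 T, f (F+m) := by
  have h : Finset.Icc F (F+T) = Finset.map (addLeftEmbedding F) (Finset.Icc 0 T) := by
    rw [Finset.map_add_left_Icc]; norm_num
  rw [h, Finset.sum_map]
  exact Finset.sum_congr rfl (fun m _ => by rw [addLeftEmbedding_apply])

lemma Icc0_insert (T : ℕ) : Finset.Icc 0 T = insert 0 (Finset.Icc 1 T) := by
  ext n; simp [Finset.mem_Icc]; omega

lemma splitA (j p : ℕ) :
    SS p (Nat.fib (2*j+3) - 1)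
      = SS p (Nat.fib (2*j+2) - 1) + ((Nat.fib (2*j+3) : ℝ) - 1) ^ p
        + ∑ m ∈ Finset.Icc 1 (Nat.fib (2*j+1) - 1), (aE m + (Nat.fib (2*j+3) : ℝ)) ^ p := by
  have h1 : 1 ≤ Nat.fib (2*j+1) := Nat.fib_pos.mpr (by omega)
  have h2 : 1 ≤ Nat.fib (2*j+2) := Nat.fib_pos.mpr (by omega)
  have hrec : Nat.fib (2*j+3) = Nat.fib (2*j+1) + Nat.fib (2*j+2) := by
    rw [show 2*j+3 = (2*j+1)+2 from rfl, Nat.fib_add_two]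
  have hsplit : Nat.fib (2*j+3) - 1 = (Nat.fib (2*j+2) - 1) + Nat.fib (2*j+1) := by omega
  unfold SS
  rw [hsplit, sum_split]
  have he : Nat.fib (2*j+2) - 1 + 1 = Nat.fib (2*j+2) := by omega
  have he2 : Nat.fib (2*j+2) - 1 + Nat.fib (2*j+1)
      = Nat.fib (2*j+2) + (Nat.fib (2*j+1) - 1) := by omega
  rw [he, he2, sum_shift, Icc0_insert, Finset.sum_insert (by simp), ← add_assoc]
  have ht : aE (Nat.fib (2*j+2) + 0) ^ p = ((Nat.fib (2*j+3) : ℝ) - 1) ^ p := by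
    rw [show Nat.fib (2*j+2) + 0 = Nat.fib (2*j+2) from rfl, aE_fib_even j]
  have hsum : ∑ m ∈ Finset.Icc 1 (Nat.fib (2*j+1) - 1), aE (Nat.fib (2*j+2) + m) ^ p
      = ∑ m ∈ Finset.Icc 1 (Nat.fib (2*j+1) - 1), (aE m + (Nat.fib (2*j+3) : ℝ)) ^ p := by
    refine Finset.sum_congr rfl (fun m hm => ?_)
    rw [Finset.mem_Icc] at hm
    rw [aE_shift_A j m hm.1 (by omega)]
  rw [ht, hsum]

lemma splitB (j p : ℕ) :
    SS p (Nat.fib (2*j+4) - 1)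
      = SS p (Nat.fib (2*j+3) - 1) + ((Nat.fib (2*j+4) : ℝ)) ^ p
        + ∑ m ∈ Finset.Icc 1 (Nat.fib (2*j+2) - 1), (aE m + (Nat.fib (2*j+4) : ℝ)) ^ p := by
  have h2 : 1 ≤ Nat.fib (2*j+2) := Nat.fib_pos.mpr (by omega)
  have h3 : 1 ≤ Nat.fib (2*j+3) := Nat.fib_pos.mpr (by omega)
  have hrec : Nat.fib (2*j+4) = Nat.fib (2*j+2) + Nat.fib (2*j+3) := by
    rw [show 2*j+4 = (2*j+2)+2 from rfl, Nat.fib_add_two]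
  have hsplit : Nat.fib (2*j+4) - 1 = (Nat.fib (2*j+3) - 1) + Nat.fib (2*j+2) := by omega
  unfold SS
  rw [hsplit, sum_split]
  have he : Nat.fib (2*j+3) - 1 + 1 = Nat.fib (2*j+3) := by omega
  have he2 : Nat.fib (2*j+3) - 1 + Nat.fib (2*j+2)
      = Nat.fib (2*j+3) + (Nat.fib (2*j+2) - 1) := by omega
  rw [he, he2, sum_shift]
  have hcg : ∀ m ∈ Finset.Icc 0 (Nat.fib (2*j+2) - 1),
      (aE (Nat.fib (2*j+3) + m)) ^ p = (aE m + (Nat.fib (2*j+4) : ℝ)) ^ p := by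
    intro m hm
    rw [Finset.mem_Icc] at hm
    rw [aE_shift_B j m (by omega)]
  rw [Finset.sum_congr rfl hcg, Icc0_insert, Finset.sum_insert (by simp), ← add_assoc,
    aE_zero, zero_add]

lemma expand1 (N : ℕ) (c : ℝ) :
    ∑ m ∈ Finset.Icc 1 N, (aE m + c) ^ 1 = SS 1 N + (N : ℝ) * c := by
  unfold SS
  have h : ∀ m ∈ Finset.Icc 1 N, (aE m + c) ^ 1 = (aE m) ^ 1 + c := fun m _ => by ring
  rw [Finset.sum_congr rfl h, Finset.sum_add_distrib, Finset.sum_const, nsmul_eq_mul,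
    Nat.card_Icc]
  norm_num

lemma expand2 (N : ℕ) (c : ℝ) :
    ∑ m ∈ Finset.Icc 1 N, (aE m + c) ^ 2
      = SS 2 N + 2 * c * SS 1 N + (N : ℝ) * c ^ 2 := by
  unfold SS
  have h : ∀ m ∈ Finset.Icc 1 N, (aE m + c) ^ 2
      = ((aE m) ^ 2 + (2*c) * (aE m) ^ 1) + c ^ 2 := fun m _ => by ring
  rw [Finset.sum_congr rfl h, Finset.sum_add_distrib, Finset.sum_add_distrib,
    ← Finset.mul_sum, Finset.sum_const, nsmul_eq_mul, Nat.card_Icc,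
    show N + 1 - 1 = N from rfl]
  all_goals ring

lemma expand3 (N : ℕ) (c : ℝ) :
    ∑ m ∈ Finset.Icc 1 N, (aE m + c) ^ 3
      = SS 3 N + 3 * c * SS 2 N + 3 * c ^ 2 * SS 1 N + (N : ℝ) * c ^ 3 := by
  unfold SS
  have h : ∀ m ∈ Finset.Icc 1 N, (aE m + c) ^ 3
      = (((aE m) ^ 3 + (3*c) * (aE m) ^ 2) + ((3*c^2) * (aE m) ^ 1 + c ^ 3)) :=
    fun m _ => by ring
  rw [Finset.sum_congr rfl h, Finset.sum_add_distrib, Finset.sum_add_distrib,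
    Finset.sum_add_distrib, ← Finset.mul_sum, ← Finset.mul_sum, Finset.sum_const,
    nsmul_eq_mul, Nat.card_Icc, show N + 1 - 1 = N from rfl]
  all_goals ring

lemma fib_sub_one_cast (m : ℕ) (h : 1 ≤ m) :
    ((Nat.fib m - 1 : ℕ) : ℝ) = (Nat.fib m : ℝ) - 1 := by
  have := Nat.fib_pos.mpr (by omega : 0 < m)
  push_cast [Nat.cast_sub this]
  ring

lemma gcatalan : ∀ j : ℕ, (Nat.fib (2*j+1) : ℝ)^2 + (Nat.fib (2*j+1) : ℝ) * (Nat.fib (2*j+2) : ℝ)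
    - (Nat.fib (2*j+2) : ℝ)^2 = 1 := by
  intro j
  induction j with
  | zero => norm_num
  | succ j IH =>
    have hw : (Nat.fib (2*j+3) : ℝ) = (Nat.fib (2*j+1) : ℝ) + (Nat.fib (2*j+2) : ℝ) := by
      rw [show 2*j+3 = (2*j+1)+2 from rfl, fib_cast_succ]
    have hz : (Nat.fib (2*j+4) : ℝ) = (Nat.fib (2*j+2) : ℝ) + (Nat.fib (2*j+3) : ℝ) := by
      rw [show 2*j+4 = (2*j+2)+2 from rfl, fib_cast_succ]
    rw [show 2*(j+1)+1 = 2*j+3 by ring, show 2*(j+1)+2 = 2*j+4 by ring, hz, hw]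
    linear_combination IH

lemma main_forms : ∀ j : ℕ,
    SS 1 (Nat.fib (2*j+1) - 1) = ((Nat.fib (2*j+1) : ℝ) - 1) * ((Nat.fib (2*j+2) : ℝ) - 1) / 2
    ∧ SS 2 (Nat.fib (2*j+1) - 1) = (-1/2 + 2*(Nat.fib (2*j+2) : ℝ)/3 - (Nat.fib (2*j+2) : ℝ)^2/2 + (Nat.fib (2*j+1) : ℝ)/2 - (Nat.fib (2*j+1) : ℝ)*(Nat.fib (2*j+2) : ℝ)/2 + (Nat.fib (2*j+1) : ℝ)*(Nat.fib (2*j+2) : ℝ)^2/3)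
    ∧ SS 3 (Nat.fib (2*j+1) - 1) = (1/2 - (Nat.fib (2*j+2) : ℝ) + (Nat.fib (2*j+2) : ℝ)^2 - (Nat.fib (2*j+2) : ℝ)^3/2 - (Nat.fib (2*j+1) : ℝ)/2 + 3*(Nat.fib (2*j+1) : ℝ)*(Nat.fib (2*j+2) : ℝ)/4 - (Nat.fib (2*j+1) : ℝ)*(Nat.fib (2*j+2) : ℝ)^2/2 + (Nat.fib (2*j+1) : ℝ)*(Nat.fib (2*j+2) : ℝ)^3/4)
    ∧ SS 1 (Nat.fib (2*j+2) - 1) = ((Nat.fib (2*j+2) : ℝ) - 1) * ((Nat.fib (2*j+3) : ℝ) - 1) / 2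
    ∧ SS 2 (Nat.fib (2*j+2) - 1) = (-1/2 + (Nat.fib (2*j+3) : ℝ) - (Nat.fib (2*j+3) : ℝ)^2/2 + (Nat.fib (2*j+2) : ℝ)/6 - (Nat.fib (2*j+2) : ℝ)*(Nat.fib (2*j+3) : ℝ)/2 + (Nat.fib (2*j+2) : ℝ)*(Nat.fib (2*j+3) : ℝ)^2/3)
    ∧ SS 3 (Nat.fib (2*j+2) - 1) = (1/2 - 3*(Nat.fib (2*j+3) : ℝ)/2 + 3*(Nat.fib (2*j+3) : ℝ)^2/2 - (Nat.fib (2*j+3) : ℝ)^3/2 + (Nat.fib (2*j+2) : ℝ)*(Nat.fib (2*j+3) : ℝ)/4 - (Nat.fib (2*j+2) : ℝ)*(Nat.fib (2*j+3) : ℝ)^2/2 + (Nat.fib (2*j+2) : ℝ)*(Nat.fib (2*j+3) : ℝ)^3/4) := by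
  intro j
  induction j with
  | zero =>
    have h0 : SS 1 0 = 0 := by simp [SS]
    have h1 : SS 2 0 = 0 := by simp [SS]
    have h2 : SS 3 0 = 0 := by simp [SS]
    norm_num [Nat.fib]
    norm_num [h0, h1, h2]
  | succ j IH =>
    obtain ⟨h1, h2, h3, h4, h5, h6⟩ := IH
    have cat := gcatalan j
    have hw : (Nat.fib (2*j+3) : ℝ) = (Nat.fib (2*j+1) : ℝ) + (Nat.fib (2*j+2) : ℝ) := by
      rw [show 2*j+3 = (2*j+1)+2 from rfl, fib_cast_succ]
    have hz : (Nat.fib (2*j+4) : ℝ) = (Nat.fib (2*j+2) : ℝ) + (Nat.fib (2*j+3) : ℝ) := by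
      rw [show 2*j+4 = (2*j+2)+2 from rfl, fib_cast_succ]
    have hz5 : (Nat.fib (2*j+5) : ℝ) = (Nat.fib (2*j+3) : ℝ) + (Nat.fib (2*j+4) : ℝ) := by
      rw [show 2*j+5 = (2*j+3)+2 from rfl, fib_cast_succ]
    have n1 : SS 1 (Nat.fib (2*j+3) - 1) = ((Nat.fib (2*j+3) : ℝ) - 1) * ((Nat.fib (2*j+4) : ℝ) - 1) / 2 := by
      rw [splitA j 1, expand1, fib_sub_one_cast (2*j+1) (by omega), h1, h4, hz, hw]
      linear_combination (1/2 : ℝ) * cat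
    have n2 : SS 2 (Nat.fib (2*j+3) - 1) = (-1/2 + 2*(Nat.fib (2*j+4) : ℝ)/3 - (Nat.fib (2*j+4) : ℝ)^2/2 + (Nat.fib (2*j+3) : ℝ)/2 - (Nat.fib (2*j+3) : ℝ)*(Nat.fib (2*j+4) : ℝ)/2 + (Nat.fib (2*j+3) : ℝ)*(Nat.fib (2*j+4) : ℝ)^2/3) := by
      rw [splitA j 2, expand2, fib_sub_one_cast (2*j+1) (by omega), h1, h2, h5, hz, hw]
      linear_combination (-1 : ℝ) * (1/2 - (2/3)*((Nat.fib (2*j+1) : ℝ) + (Nat.fib (2*j+2) : ℝ)) - (1/3)*(Nat.fib (2*j+2) : ℝ)) * cat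
    have n3 : SS 3 (Nat.fib (2*j+3) - 1) = (1/2 - (Nat.fib (2*j+4) : ℝ) + (Nat.fib (2*j+4) : ℝ)^2 - (Nat.fib (2*j+4) : ℝ)^3/2 - (Nat.fib (2*j+3) : ℝ)/2 + 3*(Nat.fib (2*j+3) : ℝ)*(Nat.fib (2*j+4) : ℝ)/4 - (Nat.fib (2*j+3) : ℝ)*(Nat.fib (2*j+4) : ℝ)^2/2 + (Nat.fib (2*j+3) : ℝ)*(Nat.fib (2*j+4) : ℝ)^3/4) := by
      rw [splitA j 3, expand3, fib_sub_one_cast (2*j+1) (by omega), h1, h2, h3, h6, hz, hw]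
      linear_combination (-1 : ℝ) * (-1/2 + (Nat.fib (2*j+2) : ℝ)/2 - (Nat.fib (2*j+2) : ℝ)^2/4 + ((Nat.fib (2*j+1) : ℝ) + (Nat.fib (2*j+2) : ℝ)) - (3/4)*(Nat.fib (2*j+2) : ℝ)*((Nat.fib (2*j+1) : ℝ) + (Nat.fib (2*j+2) : ℝ)) - (3/4)*((Nat.fib (2*j+1) : ℝ) + (Nat.fib (2*j+2) : ℝ))^2) * cat
    have n4 : SS 1 (Nat.fib (2*j+4) - 1) = ((Nat.fib (2*j+4) : ℝ) - 1) * ((Nat.fib (2*j+5) : ℝ) - 1) / 2 := by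
      rw [splitB j 1, expand1, fib_sub_one_cast (2*j+2) (by omega), n1, h4, hz5, hz, hw]
      linear_combination (-1 : ℝ) * (1/2 : ℝ) * cat
    have n5 : SS 2 (Nat.fib (2*j+4) - 1) = (-1/2 + (Nat.fib (2*j+5) : ℝ) - (Nat.fib (2*j+5) : ℝ)^2/2 + (Nat.fib (2*j+4) : ℝ)/6 - (Nat.fib (2*j+4) : ℝ)*(Nat.fib (2*j+5) : ℝ)/2 + (Nat.fib (2*j+4) : ℝ)*(Nat.fib (2*j+5) : ℝ)^2/3) := by
      rw [splitB j 2, expand2, fib_sub_one_cast (2*j+2) (by omega), n2, h4, h5, hz5, hz, hw]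
      linear_combination (-1 : ℝ) * (-1/2 + ((Nat.fib (2*j+1) : ℝ) + (Nat.fib (2*j+2) : ℝ)) + (2/3)*(Nat.fib (2*j+2) : ℝ)) * cat
    have n6 : SS 3 (Nat.fib (2*j+4) - 1) = (1/2 - 3*(Nat.fib (2*j+5) : ℝ)/2 + 3*(Nat.fib (2*j+5) : ℝ)^2/2 - (Nat.fib (2*j+5) : ℝ)^3/2 + (Nat.fib (2*j+4) : ℝ)*(Nat.fib (2*j+5) : ℝ)/4 - (Nat.fib (2*j+4) : ℝ)*(Nat.fib (2*j+5) : ℝ)^2/2 + (Nat.fib (2*j+4) : ℝ)*(Nat.fib (2*j+5) : ℝ)^3/4) := by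
      rw [splitB j 3, expand3, fib_sub_one_cast (2*j+2) (by omega), n3, h4, h5, h6, hz5, hz, hw]
      linear_combination (-1 : ℝ) * (1/2 - (Nat.fib (2*j+2) : ℝ) + (3/4)*(Nat.fib (2*j+2) : ℝ)^2 - (3/2)*((Nat.fib (2*j+1) : ℝ) + (Nat.fib (2*j+2) : ℝ)) + (9/4)*(Nat.fib (2*j+2) : ℝ)*((Nat.fib (2*j+1) : ℝ) + (Nat.fib (2*j+2) : ℝ)) + (7/4)*((Nat.fib (2*j+1) : ℝ) + (Nat.fib (2*j+2) : ℝ))^2) * cat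
    rw [show 2*(j+1)+1 = 2*j+3 by ring, show 2*(j+1)+2 = 2*j+4 by ring,
      show 2*(j+1)+3 = 2*j+5 by ring]
    exact ⟨n1, n2, n3, n4, n5, n6⟩

theorem A_even_three (k : ℕ) (hk : 1 ≤ k) :
    (∑ n ∈ Finset.Icc 1 (Nat.fib (2 * k) - 1), (⌊(1 + Real.sqrt 5) / 2 * (n : ℝ)⌋ : ℝ) ^ 3) =
      (1 / 4) * ((Nat.fib (2 * k - 1) : ℝ) - 1) * ((Nat.fib (2 * k + 1) : ℝ) - 1) ^ 2 *
        ((Nat.fib (2 * k + 2) : ℝ) - 1) := by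
  obtain ⟨j, rfl⟩ : ∃ j, k = j + 1 := ⟨k - 1, by omega⟩
  have h6 := (main_forms j).2.2.2.2.2
  have hw : (Nat.fib (2*j+3) : ℝ) = (Nat.fib (2*j+1) : ℝ) + (Nat.fib (2*j+2) : ℝ) := by
    rw [show 2*j+3 = (2*j+1)+2 from rfl, fib_cast_succ]
  have hz : (Nat.fib (2*j+4) : ℝ) = (Nat.fib (2*j+2) : ℝ) + (Nat.fib (2*j+3) : ℝ) := by
    rw [show 2*j+4 = (2*j+2)+2 from rfl, fib_cast_succ]
  have cat := gcatalan j
  rw [show 2*(j+1) = 2*j+2 by ring]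
  rw [show 2*j+2-1 = 2*j+1 by omega, show 2*j+2+1 = 2*j+3 from rfl,
    show 2*j+2+2 = 2*j+4 from rfl]
  have hdef : (∑ n ∈ Finset.Icc 1 (Nat.fib (2*j+2) - 1),
      (⌊(1 + Real.sqrt 5) / 2 * (n : ℝ)⌋ : ℝ) ^ 3) = SS 3 (Nat.fib (2*j+2) - 1) := rfl
  rw [hdef, h6, hz, hw]
  linear_combination (-(1/4)*((Nat.fib (2*j+1) : ℝ) + (Nat.fib (2*j+2) : ℝ))^2 + ((Nat.fib (2*j+1) : ℝ) + (Nat.fib (2*j+2) : ℝ))/2 - 1/4) * cat
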